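/- Suppose a polynomial of the form P(x)^2 + c (with c ≠ 0, P monic of degree m over C) has combinatorial type (m_1,...,m_k) (i.e., k distinct roots with multiplicities m_i). If ∑_i ⌊m_i/2⌋ ≥ m - 1 and at least one m_i is odd, then exactly two of the m_i are odd and (m_1,...,m_k) is a permutation of (2,...,2,1,1) with m-1 twos. -/
import Mathlib


open Polynomial

/-- If P^2 + c (c ≠ 0, P monic of degree m over ℂ) has combinatorial type
(m_1,…,m_k) with ∑ ⌊m_i/2⌋ ≥ m-1 and at least one m_i odd, then exactly two of
the m_i equal 1, the remaining m-1 of them equal 2, and k = m+1. -/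
theorem stmt7 (m k : ℕ) (hm : 2 ≤ m) (P : Polynomial ℂ) (hP : P.Monic)
    (hdeg : P.natDegree = m) (c : ℂ) (hc : c ≠ 0) (x : Fin k → ℂ) (mi : Fin k → ℕ)
    (hx : Function.Injective x) (hmi : ∀ i, 1 ≤ mi i)
    (hfac : P ^ 2 + C c = ∏ i, (X - C (x i)) ^ mi i)
    (hfloor : m - 1 ≤ ∑ i, mi i / 2) (hodd : ∃ i, Odd (mi i)) :
    k = m + 1 ∧
    (Finset.univ.filter fun i => mi i = 1).card = 2 ∧
    (Finset.univ.filter fun i => mi i = 2).card = m - 1 ∧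
    (∀ i, mi i = 1 ∨ mi i = 2) := by
  have hP2deg : (P ^ 2).natDegree = 2 * m := by
    rw [natDegree_pow, hdeg]
  have hfdeg : (P ^ 2 + C c).natDegree = 2 * m := by
    rw [natDegree_add_C, hP2deg]
  have hfne : (P ^ 2 + C c) ≠ 0 := by
    intro h
    rw [h, natDegree_zero] at hfdeg
    omega
  -- sum of multiplicities is 2m
  have hsum : ∑ i, mi i = 2 * m := by
    have := hfdeg
    rw [hfac, natDegree_prod _ _ (fun i _ => pow_ne_zero _ (X_sub_C_ne_zero _))] at this
    simpa [natDegree_pow] using this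
  -- P does not vanish at the roots
  have heval0 : ∀ i, (P ^ 2 + C c).eval (x i) = 0 := by
    intro i
    rw [hfac, eval_prod]
    apply Finset.prod_eq_zero (Finset.mem_univ i)
    have := hmi i
    simp [zero_pow (by omega : mi i ≠ 0)]
  have hroot : ∀ i, P.eval (x i) ≠ 0 := by
    intro i hzero
    have := heval0 i
    simp [hzero] at this
    exact hc this
  -- each (X - x i)^(mi i) divides P^2 + c
  have hdvdf : ∀ i, (X - C (x i)) ^ mi i ∣ (P ^ 2 + C c) := by
    intro i
    rw [hfac]
    exact Finset.dvd_prod_of_mem _ (Finset.mem_univ i)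
  -- derivative
  have hfd : derivative (P ^ 2 + C c) = P * (C 2 * derivative P) := by
    simp [derivative_pow]
    ring
  have hPd : derivative P ≠ 0 := by
    intro h
    have := natDegree_eq_zero_of_derivative_eq_zero h
    omega
  have hdvdfd : ∀ i, (X - C (x i)) ^ (mi i - 1) ∣ derivative (P ^ 2 + C c) := by
    intro i
    have h1 : mi i ≤ rootMultiplicity (x i) (P ^ 2 + C c) :=
      (le_rootMultiplicity_iff hfne).2 (hdvdf i)
    have h2 : mi i - 1 ≤ rootMultiplicity (x i) (derivative (P ^ 2 + C c)) :=
      le_trans (by omega)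
        (rootMultiplicity_sub_one_le_derivative_rootMultiplicity (P ^ 2 + C c) (x i))
    exact dvd_trans (pow_dvd_pow _ h2) (pow_rootMultiplicity_dvd _ _)
  -- the product divides the derivative
  have hgdvd : (∏ i, (X - C (x i)) ^ (mi i - 1)) ∣ derivative (P ^ 2 + C c) := by
    apply Fintype.prod_dvd_of_coprime
    · intro i j hij
      exact (pairwise_coprime_X_sub_C hx hij).pow
    · exact hdvdfd
  -- coprime with P
  have hcop : IsCoprime (∏ i, (X - C (x i)) ^ (mi i - 1)) P := by
    apply IsCoprime.prod_left
    intro i _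
    apply IsCoprime.pow_left
    rw [(irreducible_X_sub_C (x i)).coprime_iff_not_dvd, dvd_iff_isRoot]
    exact hroot i
  have hgdvdP' : (∏ i, (X - C (x i)) ^ (mi i - 1)) ∣ C 2 * derivative P := by
    apply hcop.dvd_of_dvd_mul_left
    rw [← hfd]
    exact hgdvd
  -- degree bound
  have hkey : ∑ i, (mi i - 1) ≤ m - 1 := by
    have h2P : C (2 : ℂ) * derivative P ≠ 0 := mul_ne_zero (by norm_num) hPd
    have := natDegree_le_of_dvd hgdvdP' h2P
    rw [natDegree_prod _ _ (fun i _ => pow_ne_zero _ (X_sub_C_ne_zero _))] at this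
    simp only [natDegree_pow, natDegree_X_sub_C, mul_one] at this
    calc ∑ i, (mi i - 1) ≤ (C (2:ℂ) * derivative P).natDegree := this
    _ ≤ (derivative P).natDegree := natDegree_mul_le.trans (by simp)
    _ ≤ m - 1 := by rw [← hdeg]; exact natDegree_derivative_le P
  -- combinatorics
  have hle : ∀ i ∈ Finset.univ, mi i / 2 ≤ mi i - 1 := by
    intro i _
    have := hmi i
    omega
  have hchain : ∑ i, mi i / 2 = ∑ i, (mi i - 1) := by
    have h1 : ∑ i, mi i / 2 ≤ ∑ i, (mi i - 1) := Finset.sum_le_sum hle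
    omega
  have hpt : ∀ i, mi i / 2 = mi i - 1 := by
    intro i
    exact (Finset.sum_eq_sum_iff_of_le hle).1 hchain i (Finset.mem_univ i)
  have hsmall : ∀ i, mi i = 1 ∨ mi i = 2 := by
    intro i
    have h1 := hpt i
    have h2 := hmi i
    omega
  have hsum1 : ∑ i, (mi i - 1) + k = 2 * m := by
    have : ∑ i, (mi i - 1) + ∑ i : Fin k, 1 = ∑ i, mi i := by
      rw [← Finset.sum_add_distrib]
      apply Finset.sum_congr rfl
      intro i _
      have := hmi i
      omega
    simpa [hsum] using this
  have heq : ∑ i, (mi i - 1) = m - 1 := by omega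
  have hk : k = m + 1 := by omega
  have hset : Finset.univ.filter (fun i => ¬mi i = 1) =
      Finset.univ.filter (fun i => mi i = 2) := by
    apply Finset.filter_congr
    intro i _
    rcases hsmall i with h | h <;> simp [h]
  have hcards : (Finset.univ.filter fun i => mi i = 1).card +
      (Finset.univ.filter fun i => mi i = 2).card = k := by
    have h := Finset.card_filter_add_card_filter_not
      (s := (Finset.univ : Finset (Fin k))) (fun i => mi i = 1)
    rw [hset] at h
    simpa [Finset.card_univ] using h
  have hwsum : (Finset.univ.filter fun i => mi i = 1).card +
      2 * (Finset.univ.filter fun i => mi i = 2).card = 2 * m := by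
    have h := hsum
    rw [← Finset.sum_filter_add_sum_filter_not Finset.univ (fun i => mi i = 1)] at h
    have e1 : ∑ i ∈ Finset.univ.filter (fun i => mi i = 1), mi i =
        (Finset.univ.filter fun i => mi i = 1).card := by
      rw [Finset.sum_congr rfl (fun i hi => (Finset.mem_filter.1 hi).2)]
      simp
    have e2 : ∑ i ∈ Finset.univ.filter (fun i => ¬mi i = 1), mi i =
        2 * (Finset.univ.filter fun i => mi i = 2).card := by
      rw [hset, Finset.sum_congr rfl (fun i hi => (Finset.mem_filter.1 hi).2)]
      simp [mul_comm]
    rw [e1, e2] at h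
    exact h
  exact ⟨hk, by omega, by omega, hsmall⟩
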